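/- Suppose A, B > 0 with B/A = (1/3)^{2/15}. Then the system 2y₁³ + y₂³ = A³, 2y₁⁵ + y₂⁵ = B⁵ has exactly one solution with y₁, y₂ ≥ 0, namely y₁ = y₂ = A/3^{1/3}. -/

import Mathlib

theorem system2_solutions_critical_ratio (A B : ℝ) (hA : 0 < A) (hB : 0 < B)
    (hr : B / A = ((1 : ℝ) / 3) ^ ((2 : ℝ) / 15)) :
    ∀ y₁ y₂ : ℝ, 0 ≤ y₁ → 0 ≤ y₂ →
      ((2 * y₁ ^ 3 + y₂ ^ 3 = A ^ 3 ∧ 2 * y₁ ^ 5 + y₂ ^ 5 = B ^ 5) ↔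
        (y₁ = A / (3 : ℝ) ^ ((1 : ℝ) / 3) ∧ y₂ = A / (3 : ℝ) ^ ((1 : ℝ) / 3))) := by
  have h3pos : (0:ℝ) < (3:ℝ) ^ ((1:ℝ)/3) := Real.rpow_pos_of_pos (by norm_num) _
  set c : ℝ := A / (3:ℝ) ^ ((1:ℝ)/3) with hcdef
  have hc : 0 < c := div_pos hA h3pos
  have h13 : ((3:ℝ) ^ ((1:ℝ)/3))^(3:ℕ) = 3 := by
    rw [← Real.rpow_natCast ((3:ℝ)^((1:ℝ)/3)) 3, ← Real.rpow_mul (by norm_num : (0:ℝ) ≤ 3)]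
    norm_num
  have h53 : ((3:ℝ) ^ ((1:ℝ)/3))^(5:ℕ) = (3:ℝ) ^ ((5:ℝ)/3) := by
    rw [← Real.rpow_natCast ((3:ℝ)^((1:ℝ)/3)) 5, ← Real.rpow_mul (by norm_num : (0:ℝ) ≤ 3)]
    norm_num
  have hA3 : A^3 = 3 * c^3 := by
    rw [hcdef, div_pow, h13]
    field_simp
  have hr5 : (((1:ℝ)/3)^((2:ℝ)/15))^(5:ℕ) = ((1:ℝ)/3)^((2:ℝ)/3) := by
    rw [← Real.rpow_natCast (((1:ℝ)/3)^((2:ℝ)/15)) 5,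
      ← Real.rpow_mul (by norm_num : (0:ℝ) ≤ 1/3)]
    norm_num
  have key : ((1:ℝ)/3)^((2:ℝ)/3) * (3:ℝ)^((5:ℝ)/3) = 3 := by
    rw [one_div, Real.inv_rpow (by norm_num : (0:ℝ) ≤ 3),
      ← Real.rpow_neg (by norm_num : (0:ℝ) ≤ 3),
      ← Real.rpow_add (by norm_num : (0:ℝ) < 3)]
    norm_num
  have hBA : B = ((1:ℝ)/3)^((2:ℝ)/15) * A := by
    rw [← hr]; field_simp
  have hB5 : B^5 = 3 * c^5 := by
    have h1 : B^5 = (((1:ℝ)/3)^((2:ℝ)/15))^(5:ℕ) * A^5 := by rw [hBA]; ring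
    rw [h1, hr5, hcdef, div_pow, h53]
    field_simp
    linear_combination key
  intro y₁ y₂ hy₁ hy₂
  constructor
  · rintro ⟨h1, h2⟩
    rw [hA3] at h1
    rw [hB5] at h2
    have hsum : 2*((y₁-c)^2*(3*y₁^3+6*c*y₁^2+4*c^2*y₁+2*c^3))
        + (y₂-c)^2*(3*y₂^3+6*c*y₂^2+4*c^2*y₂+2*c^3) = 0 := by
      linear_combination 3*h2 - 5*c^2*h1
    have hf1 : 0 < 3*y₁^3+6*c*y₁^2+4*c^2*y₁+2*c^3 := by
      have := pow_pos hc 3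
      nlinarith [pow_nonneg hy₁ 3, sq_nonneg y₁, mul_nonneg hc.le (sq_nonneg y₁),
        mul_nonneg (sq_nonneg c) hy₁]
    have hf2 : 0 < 3*y₂^3+6*c*y₂^2+4*c^2*y₂+2*c^3 := by
      have := pow_pos hc 3
      nlinarith [pow_nonneg hy₂ 3, sq_nonneg y₂, mul_nonneg hc.le (sq_nonneg y₂),
        mul_nonneg (sq_nonneg c) hy₂]
    have t1 : 0 ≤ (y₁-c)^2*(3*y₁^3+6*c*y₁^2+4*c^2*y₁+2*c^3) :=
      mul_nonneg (sq_nonneg _) hf1.le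
    have t2 : 0 ≤ (y₂-c)^2*(3*y₂^3+6*c*y₂^2+4*c^2*y₂+2*c^3) :=
      mul_nonneg (sq_nonneg _) hf2.le
    have e1 : (y₁-c)^2*(3*y₁^3+6*c*y₁^2+4*c^2*y₁+2*c^3) = 0 := by linarith
    have e2 : (y₂-c)^2*(3*y₂^3+6*c*y₂^2+4*c^2*y₂+2*c^3) = 0 := by linarith
    have hy1c : y₁ = c := by
      rcases mul_eq_zero.mp e1 with h | h
      · have := (pow_eq_zero_iff two_ne_zero).mp h
        linarith [sub_eq_zero.mp this]
      · exact absurd h hf1.ne'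
    have hy2c : y₂ = c := by
      rcases mul_eq_zero.mp e2 with h | h
      · have := (pow_eq_zero_iff two_ne_zero).mp h
        linarith [sub_eq_zero.mp this]
      · exact absurd h hf2.ne'
    exact ⟨hy1c, hy2c⟩
  · rintro ⟨rfl, rfl⟩
    constructor
    · linarith [hA3]
    · linarith [hB5]
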